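/- Let n ≥ 2, d ≥ 1, let a_1,…,a_n, b_1,…,b_n ∈ {0,1}^d be binary vectors, let t ≥ 1 be an integer, and let 0 ≤ μ < 1. Set C = 2 ln((1+μ)n/(1−μ)) and define S_{ij} = exp(C · a_i^T b_j) for i, j ∈ [n]. Suppose Ŝ ∈ ℝ^{n×n} satisfies |Ŝ_{ij} − S_{ij}| ≤ μ S_{ij} for all i, j ∈ [n], and set Y_i = Σ_{j=1}^n Ŝ_{ij}. Then there exist i, j ∈ [n] with a_i^T b_j ≥ t if and only if there exists i ∈ [n] with Y_i > (1+μ) n · exp(C(t−1)). -/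

import Mathlib

open Finset Real

/-- Dot product of two real vectors. -/
noncomputable def dotp {d : ℕ} (x y : Fin d → ℝ) : ℝ := ∑ r, x r * y r

/-- Case analysis underlying the hardness of multiplicative element-wise
approximation of the score matrix `S` for exponential dot-product
self-attention. -/
theorem tvpp_score_matrix_mult_approx (n d t : ℕ) (hn : 2 ≤ n) (hd : 1 ≤ d) (ht : 1 ≤ t)
    (a b : Fin n → Fin d → ℝ)
    (ha : ∀ i r, a i r = 0 ∨ a i r = 1) (hb : ∀ i r, b i r = 0 ∨ b i r = 1)
    (μ : ℝ) (hμ0 : 0 ≤ μ) (hμ1 : μ < 1)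
    (C : ℝ) (hC : C = 2 * Real.log ((1 + μ) * n / (1 - μ)))
    (S : Fin n → Fin n → ℝ)
    (hS : ∀ i j, S i j = Real.exp (C * dotp (a i) (b j)))
    (Shat : Fin n → Fin n → ℝ)
    (hShat : ∀ i j, |Shat i j - S i j| ≤ μ * S i j)
    (Y : Fin n → ℝ) (hY : ∀ i, Y i = ∑ j, Shat i j) :
    (∃ i j, (t : ℝ) ≤ dotp (a i) (b j)) ↔
      (∃ i, Y i > (1 + μ) * (n : ℝ) * Real.exp (C * ((t : ℝ) - 1))) := by
  have hn0 : (0:ℝ) < n := by positivity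
  have hn2 : (2:ℝ) ≤ n := by exact_mod_cast hn
  have h1μ : (0:ℝ) < 1 - μ := by linarith
  have h1μ' : (0:ℝ) < 1 + μ := by linarith
  set K : ℝ := (1 + μ) * n / (1 - μ) with hKdef
  have hK1 : 1 < K := by
    rw [hKdef, lt_div_iff₀ h1μ]
    nlinarith
  have hK0 : 0 < K := lt_trans one_pos hK1
  have hC0 : 0 < C := by
    rw [hC]; have := Real.log_pos hK1; linarith
  have hexpC : Real.exp C = K ^ 2 := by
    have : C = Real.log K + Real.log K := by rw [hC]; ring
    rw [this, Real.exp_add, Real.exp_log hK0]; ring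
  have hKmul : (1 - μ) * K = (1 + μ) * n := by
    rw [hKdef]; field_simp [h1μ.ne']
  have hnat : ∀ i j, ∃ m : ℕ, dotp (a i) (b j) = m := by
    intro i j
    refine ⟨∑ r, if a i r * b j r = 1 then 1 else 0, ?_⟩
    unfold dotp
    push_cast
    apply Finset.sum_congr rfl
    intro r _
    rcases ha i r with h | h <;> rcases hb j r with h' | h' <;> norm_num [h, h']
  constructor
  · rintro ⟨i, j, hij⟩
    refine ⟨i, ?_⟩
    have hlow : ∀ j', (1 - μ) * S i j' ≤ Shat i j' := by
      intro j'
      have := abs_le.mp (hShat i j')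
      nlinarith [this.1]
    have hSpos : ∀ j', 0 < S i j' := by
      intro j'; rw [hS]; exact Real.exp_pos _
    have h1 : (1 - μ) * S i j ≤ Y i := by
      rw [hY]
      calc (1 - μ) * S i j ≤ Shat i j := hlow j
        _ ≤ ∑ j', Shat i j' := by
            apply Finset.single_le_sum (f := fun j' => Shat i j')
            · intro j' _
              exact le_trans (mul_pos h1μ (hSpos j')).le (hlow j')
            · exact Finset.mem_univ j
    have h2 : (1 - μ) * Real.exp (C * t) ≤ (1 - μ) * S i j := by
      rw [hS]
      have := Real.exp_le_exp.mpr (mul_le_mul_of_nonneg_left hij hC0.le)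
      nlinarith
    have h3 : Real.exp (C * t) = Real.exp C * Real.exp (C * (t - 1)) := by
      rw [← Real.exp_add]; ring_nf
    have h4 : (1 + μ) * n * Real.exp (C * ((t:ℝ) - 1)) <
        (1 - μ) * Real.exp (C * t) := by
      rw [h3, hexpC]
      have hE : 0 < Real.exp (C * ((t:ℝ) - 1)) := Real.exp_pos _
      have hsq : (1 - μ) * K ^ 2 = (1 + μ) * n * K := by
        calc (1 - μ) * K ^ 2 = ((1 - μ) * K) * K := by ring
          _ = (1 + μ) * n * K := by rw [hKmul]
      have : (1 + μ) * n < (1 - μ) * K ^ 2 := by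
        rw [hsq]; nlinarith [mul_pos h1μ' hn0]
      nlinarith
    linarith
  · rintro ⟨i, hi⟩
    by_contra hcon
    push_neg at hcon
    have hub : ∀ j, Shat i j ≤ (1 + μ) * Real.exp (C * ((t:ℝ) - 1)) := by
      intro j
      obtain ⟨m, hm⟩ := hnat i j
      have hmt : (m:ℝ) ≤ (t:ℝ) - 1 := by
        have h1 : (m:ℝ) < t := by rw [← hm]; exact hcon i j
        have h2 : m < t := by exact_mod_cast h1
        have : m + 1 ≤ t := h2
        have : ((m:ℝ) + 1) ≤ (t:ℝ) := by exact_mod_cast this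
        linarith
      have hSle : S i j ≤ Real.exp (C * ((t:ℝ) - 1)) := by
        rw [hS, hm]
        exact Real.exp_le_exp.mpr (mul_le_mul_of_nonneg_left hmt hC0.le)
      have hSpos : 0 < S i j := by rw [hS]; exact Real.exp_pos _
      have := abs_le.mp (hShat i j)
      nlinarith [this.2]
    have : Y i ≤ (n:ℝ) * ((1 + μ) * Real.exp (C * ((t:ℝ) - 1))) := by
      rw [hY]
      calc ∑ j, Shat i j ≤ ∑ _j : Fin n, (1 + μ) * Real.exp (C * ((t:ℝ) - 1)) :=
            Finset.sum_le_sum (fun j _ => hub j)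
        _ = (n:ℝ) * ((1 + μ) * Real.exp (C * ((t:ℝ) - 1))) := by
            rw [Finset.sum_const, Finset.card_univ, Fintype.card_fin]; ring
    have := hi
    nlinarith [Real.exp_pos (C * ((t:ℝ) - 1))]
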